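/- Let c be any symplectic capacity on ℝ^{2n}, let X, Y be real symmetric n×n matrices with X positive definite, and let Ω_{XY} = {z ∈ ℝ^{2n} : M_{XY} z·z ≤ ℏ Tr X} with M_{XY} = [[X² + Y², Y],[Y, I]]. Then (1/2)h ≤ c(Ω_{XY}) ≤ n h/2, where h = 2πℏ; moreover, if all eigenvalues of X are equal, then c(Ω_{XY}) = n h/2. -/

import Mathlib

open Matrix

/-- The standard symplectic matrix `J = [[0, I],[−I, 0]]`. -/
def stdJ (n : ℕ) : Matrix (Fin n ⊕ Fin n) (Fin n ⊕ Fin n) ℝ :=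
  fromBlocks 0 1 (-1) 0

/-- A real `2n×2n` matrix is symplectic if `Sᵀ J S = J`. -/
def IsSymplecticMat {n : ℕ} (S : Matrix (Fin n ⊕ Fin n) (Fin n ⊕ Fin n) ℝ) : Prop :=
  Sᵀ * stdJ n * S = stdJ n

/-- The closed Euclidean ball `B^{2n}(R)` of radius `R` centered at `0` in `ℝ^{2n}`. -/
def euclBall (n : ℕ) (R : ℝ) : Set (Fin n ⊕ Fin n → ℝ) :=
  {z | ∑ i, (z i) ^ 2 ≤ R ^ 2}

/-- The symplectic cylinder `Z_j(R) = {z : x_j² + p_j² ≤ R²}`. -/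
def symplCyl (n : ℕ) (j : Fin n) (R : ℝ) : Set (Fin n ⊕ Fin n → ℝ) :=
  {z | (z (Sum.inl j)) ^ 2 + (z (Sum.inr j)) ^ 2 ≤ R ^ 2}

/-- A symplectic capacity on `ℝ^{2n}`: a `[0,∞]`-valued function on subsets of phase space that
is monotone, invariant under affine symplectic maps, conformal, and normalized on balls and
cylinders. -/
structure IsSymplecticCapacity (n : ℕ) (c : Set (Fin n ⊕ Fin n → ℝ) → ENNReal) : Prop where
  mono : ∀ Ω Ω' : Set (Fin n ⊕ Fin n → ℝ), Ω ⊆ Ω' → c Ω ≤ c Ω'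
  sympl_inv : ∀ S : Matrix (Fin n ⊕ Fin n) (Fin n ⊕ Fin n) ℝ, IsSymplecticMat S →
    ∀ z₀ : Fin n ⊕ Fin n → ℝ, ∀ Ω : Set (Fin n ⊕ Fin n → ℝ),
      c ((fun z => S.mulVec z + z₀) '' Ω) = c Ω
  conformal : ∀ lam : ℝ, 0 < lam → ∀ Ω : Set (Fin n ⊕ Fin n → ℝ),
    c ((fun z => lam • z) '' Ω) = ENNReal.ofReal (lam ^ 2) * c Ω
  norm_ball : ∀ R : ℝ, 0 < R → c (euclBall n R) = ENNReal.ofReal (Real.pi * R ^ 2)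
  norm_cyl : ∀ (j : Fin n) (R : ℝ), 0 < R →
    c (symplCyl n j R) = ENNReal.ofReal (Real.pi * R ^ 2)


section Aux

variable {n : ℕ}

/-- Real spectral theorem packaged for our use. -/
lemma fermi_real_spectral (X : Matrix (Fin n) (Fin n) ℝ) (hXpd : X.PosDef) :
    ∃ (Q : Matrix (Fin n) (Fin n) ℝ) (d : Fin n → ℝ),
      Qᵀ * Q = 1 ∧ Q * Qᵀ = 1 ∧ X = Q * diagonal d * Qᵀ ∧
      (∀ i, 0 < d i) ∧ (∀ i, d i ∈ spectrum ℝ X) := by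
  have hH := hXpd.1
  refine ⟨(hH.eigenvectorUnitary : Matrix (Fin n) (Fin n) ℝ), hH.eigenvalues, ?_, ?_, ?_,
    hXpd.eigenvalues_pos, hH.eigenvalues_mem_spectrum_real⟩
  · have := (Matrix.mem_unitaryGroup_iff').mp hH.eigenvectorUnitary.2
    simpa [star_eq_conjTranspose] using this
  · have := (Matrix.mem_unitaryGroup_iff).mp hH.eigenvectorUnitary.2
    simpa [star_eq_conjTranspose] using this
  · have := hH.spectral_theorem
    simpa [star_eq_conjTranspose, Function.comp] using this

variable (Q Y : Matrix (Fin n) (Fin n) ℝ) (d : Fin n → ℝ)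

lemma fermi_sympl_of_blocks (A C Db : Matrix (Fin n) (Fin n) ℝ)
    (h1 : Aᵀ * C = Cᵀ * A) (h2 : Aᵀ * Db = 1) (h3 : Dbᵀ * A = 1) :
    IsSymplecticMat (fromBlocks A 0 C Db) := by
  unfold IsSymplecticMat stdJ
  rw [fromBlocks_transpose, fromBlocks_multiply, fromBlocks_multiply]
  simp [h2, h3, h1]

lemma fermi_form_calc (hQtQ : Qᵀ * Q = 1) (hY : Yᵀ = Y) (e : Fin n → ℝ)
    (he : ∀ i, e i ≠ 0) (hed : ∀ i, e i * e i = d i) :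
    (fromBlocks (Q * diagonal (fun i => (e i)⁻¹)) 0
        (-(Y * (Q * diagonal (fun i => (e i)⁻¹)))) (Q * diagonal e))ᵀ *
      (fromBlocks ((Q * diagonal d * Qᵀ) * (Q * diagonal d * Qᵀ) + Y * Y) Y Y 1) *
      (fromBlocks (Q * diagonal (fun i => (e i)⁻¹)) 0
        (-(Y * (Q * diagonal (fun i => (e i)⁻¹)))) (Q * diagonal e)) =
    diagonal (Sum.elim d d) := by
  have hQ1 : ∀ B : Matrix (Fin n) (Fin n) ℝ, Qᵀ * (Q * B) = B := by
    intro B; rw [← Matrix.mul_assoc, hQtQ, Matrix.one_mul]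
  set Δ' := diagonal (fun i => (e i)⁻¹) with hΔ'
  set Δ := diagonal e with hΔ
  set Dg := diagonal d with hDg
  set A := Q * Δ' with hA
  set Db := Q * Δ with hDb
  set X := Q * Dg * Qᵀ with hX
  have hI1 : (X * X + Y * Y) * A + Y * -(Y * A) = X * X * A := by noncomm_ring
  have hI0 : (X * X + Y * Y) * 0 + Y * Db = Y * Db := by noncomm_ring
  have hI3 : Y * A + 1 * -(Y * A) = 0 := by noncomm_ring
  have hI00 : Y * 0 + 1 * Db = Db := by noncomm_ring
  have hdiag3 : Δ' * (Dg * (Dg * Δ')) = Dg := by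
    rw [hΔ', hDg]
    simp only [diagonal_mul_diagonal]
    exact congrArg diagonal (funext fun i => by
      rw [← hed i]; field_simp)
  have hI2 : Aᵀ * (X * X * A) + (-(Y * A))ᵀ * 0 = Dg := by
    rw [Matrix.mul_zero, add_zero, hA, hX]
    simp only [Matrix.mul_assoc, transpose_mul, diagonal_transpose,
      hΔ'.symm ▸ diagonal_transpose (fun i => (e i)⁻¹)]
    rw [hQ1, hQ1, hQ1]
    exact hdiag3
  have hI2' : Aᵀ * (Y * Db) + (-(Y * A))ᵀ * Db = 0 := by
    simp only [transpose_neg, transpose_mul, hY, Matrix.neg_mul, Matrix.mul_assoc]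
    abel
  have hI4 : (0 : Matrix (Fin n) (Fin n) ℝ)ᵀ * (Y * Db) + Dbᵀ * Db = Dg := by
    rw [transpose_zero, Matrix.zero_mul, zero_add, hDb]
    simp only [Matrix.mul_assoc, transpose_mul, diagonal_transpose,
      hΔ.symm ▸ diagonal_transpose e]
    rw [hQ1, hΔ, hDg]
    simp only [diagonal_mul_diagonal]
    exact congrArg diagonal (funext fun i => hed i)
  have hI40 : (0 : Matrix (Fin n) (Fin n) ℝ)ᵀ * (X * X * A) + Dbᵀ * 0 = 0 := by
    simp
  rw [Matrix.mul_assoc, fromBlocks_multiply, hI1, hI0, hI3, hI00,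
    fromBlocks_transpose, fromBlocks_multiply, hI2, hI2', hI4, hI40,
    ← fromBlocks_diagonal]

lemma fermi_inv_calc (hQQt : Q * Qᵀ = 1) (e : Fin n → ℝ) (he : ∀ i, e i ≠ 0) :
    (fromBlocks (Q * diagonal (fun i => (e i)⁻¹)) 0
        (-(Y * (Q * diagonal (fun i => (e i)⁻¹)))) (Q * diagonal e)) *
      (fromBlocks (diagonal e * Qᵀ) 0
        (diagonal (fun i => (e i)⁻¹) * Qᵀ * Y) (diagonal (fun i => (e i)⁻¹) * Qᵀ)) = 1 := by
  have hQ2 : ∀ B : Matrix (Fin n) (Fin n) ℝ, Q * (Qᵀ * B) = B := by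
    intro B; rw [← Matrix.mul_assoc, hQQt, Matrix.one_mul]
  have hd1 : ∀ B : Matrix (Fin n) (Fin n) ℝ,
      diagonal (fun i => (e i)⁻¹) * (diagonal e * B) = B := by
    intro B
    rw [← Matrix.mul_assoc, diagonal_mul_diagonal]
    rw [show (fun i => (e i)⁻¹ * e i) = fun _ => (1 : ℝ) from
      funext fun i => inv_mul_cancel₀ (he i), diagonal_one, Matrix.one_mul]
  have hd2 : ∀ B : Matrix (Fin n) (Fin n) ℝ,
      diagonal e * (diagonal (fun i => (e i)⁻¹) * B) = B := by
    intro B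
    rw [← Matrix.mul_assoc, diagonal_mul_diagonal]
    rw [show (fun i => e i * (e i)⁻¹) = fun _ => (1 : ℝ) from
      funext fun i => mul_inv_cancel₀ (he i), diagonal_one, Matrix.one_mul]
  rw [fromBlocks_multiply]
  have h11 : Q * diagonal (fun i => (e i)⁻¹) * (diagonal e * Qᵀ) +
      0 * (diagonal (fun i => (e i)⁻¹) * Qᵀ * Y) = 1 := by
    simp only [Matrix.zero_mul, add_zero, Matrix.mul_assoc, hd1]
    exact hQQt
  have h12 : Q * diagonal (fun i => (e i)⁻¹) * 0 + 0 * (diagonal (fun i => (e i)⁻¹) * Qᵀ) =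
      0 := by simp
  have h21 : -(Y * (Q * diagonal (fun i => (e i)⁻¹))) * (diagonal e * Qᵀ) +
      Q * diagonal e * (diagonal (fun i => (e i)⁻¹) * Qᵀ * Y) = 0 := by
    simp only [Matrix.neg_mul, Matrix.mul_assoc, hd1, hd2, hQ2]
    rw [hQQt, Matrix.mul_one]
    abel
  have h22 : -(Y * (Q * diagonal (fun i => (e i)⁻¹))) * 0 +
      Q * diagonal e * (diagonal (fun i => (e i)⁻¹) * Qᵀ) = 1 := by
    simp only [Matrix.mul_zero, zero_add, Matrix.mul_assoc, hd2]
    exact hQQt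
  rw [h11, h12, h21, h22, fromBlocks_one]

lemma fermi_dot_conj {m : Type*} [Fintype m] (T M : Matrix m m ℝ) (w : m → ℝ) :
    w ⬝ᵥ ((Tᵀ * M * T) *ᵥ w) = (T *ᵥ w) ⬝ᵥ (M *ᵥ (T *ᵥ w)) := by
  rw [Matrix.mul_assoc, ← mulVec_mulVec, dotProduct_mulVec w Tᵀ, vecMul_transpose,
    ← mulVec_mulVec]

lemma fermi_quad_formula (w : Fin n ⊕ Fin n → ℝ) :
    w ⬝ᵥ ((diagonal (Sum.elim d d)) *ᵥ w) =
      ∑ j, d j * ((w (Sum.inl j)) ^ 2 + (w (Sum.inr j)) ^ 2) := by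
  simp only [dotProduct, mulVec_diagonal, Fintype.sum_sum_type, Sum.elim_inl, Sum.elim_inr]
  rw [← Finset.sum_add_distrib]
  exact Finset.sum_congr rfl fun j _ => by ring

end Aux

/-- The symplectic capacity of a Fermi ellipsoid satisfies `h/2 ≤ c(Ω_{XY}) ≤ nh/2`
(`h = 2πℏ`), with equality `c(Ω_{XY}) = nh/2` when all eigenvalues of `X` coincide. -/
theorem capacity_of_fermi_ellipsoid_bounds
    (n : ℕ) (hn : 1 ≤ n) (ℏ : ℝ) (hℏ : 0 < ℏ)
    (c : Set (Fin n ⊕ Fin n → ℝ) → ENNReal) (hc : IsSymplecticCapacity n c)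
    (X Y : Matrix (Fin n) (Fin n) ℝ)
    (hX : X.IsSymm) (hY : Y.IsSymm) (hXpd : X.PosDef) :
    ENNReal.ofReal ((2 * Real.pi * ℏ) / 2) ≤
        c {z | z ⬝ᵥ (fromBlocks (X * X + Y * Y) Y Y 1).mulVec z ≤ ℏ * X.trace} ∧
      c {z | z ⬝ᵥ (fromBlocks (X * X + Y * Y) Y Y 1).mulVec z ≤ ℏ * X.trace} ≤
        ENNReal.ofReal (n * (2 * Real.pi * ℏ) / 2) ∧
      ((∀ a ∈ spectrum ℝ X, ∀ b ∈ spectrum ℝ X, a = b) →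
        c {z | z ⬝ᵥ (fromBlocks (X * X + Y * Y) Y Y 1).mulVec z ≤ ℏ * X.trace} =
          ENNReal.ofReal (n * (2 * Real.pi * ℏ) / 2)) := by
  classical
  have hne : Nonempty (Fin n) := ⟨⟨0, hn⟩⟩
  obtain ⟨Q, d, hQtQ, hQQt, hXeq, hdpos, hdspec⟩ := fermi_real_spectral X hXpd
  set e : Fin n → ℝ := fun i => Real.sqrt (d i) with he_def
  have hepos : ∀ i, 0 < e i := fun i => Real.sqrt_pos.mpr (hdpos i)
  have hene : ∀ i, e i ≠ 0 := fun i => (hepos i).ne'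
  have hed : ∀ i, e i * e i = d i := fun i => Real.mul_self_sqrt (hdpos i).le
  set T : Matrix (Fin n ⊕ Fin n) (Fin n ⊕ Fin n) ℝ :=
    fromBlocks (Q * diagonal (fun i => (e i)⁻¹)) 0
      (-(Y * (Q * diagonal (fun i => (e i)⁻¹)))) (Q * diagonal e) with hT_def
  set Tinv : Matrix (Fin n ⊕ Fin n) (Fin n ⊕ Fin n) ℝ :=
    fromBlocks (diagonal e * Qᵀ) 0
      (diagonal (fun i => (e i)⁻¹) * Qᵀ * Y) (diagonal (fun i => (e i)⁻¹) * Qᵀ) with hTinv_def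
  set M : Matrix (Fin n ⊕ Fin n) (Fin n ⊕ Fin n) ℝ :=
    fromBlocks (X * X + Y * Y) Y Y 1 with hM_def
  set Ω : Set (Fin n ⊕ Fin n → ℝ) := {z | z ⬝ᵥ M.mulVec z ≤ ℏ * X.trace} with hΩ_def
  set E : Set (Fin n ⊕ Fin n → ℝ) :=
    {w | w ⬝ᵥ ((diagonal (Sum.elim d d)) *ᵥ w) ≤ ℏ * X.trace} with hE_def
  -- T is symplectic
  have hTsympl : IsSymplecticMat T := by
    apply fermi_sympl_of_blocks
    · -- Aᵀ C = Cᵀ A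
      simp only [transpose_neg, transpose_mul, diagonal_transpose, Matrix.mul_neg,
        Matrix.neg_mul, hY.eq, Matrix.mul_assoc]
    · simp only [transpose_mul, diagonal_transpose, Matrix.mul_assoc]
      rw [← Matrix.mul_assoc Qᵀ Q, hQtQ, Matrix.one_mul, diagonal_mul_diagonal]
      rw [show (fun i => (e i)⁻¹ * e i) = fun _ => (1 : ℝ) from
        funext fun i => inv_mul_cancel₀ (hene i), diagonal_one]
    · simp only [transpose_mul, diagonal_transpose, Matrix.mul_assoc]
      rw [← Matrix.mul_assoc Qᵀ Q, hQtQ, Matrix.one_mul, diagonal_mul_diagonal]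
      rw [show (fun i => e i * (e i)⁻¹) = fun _ => (1 : ℝ) from
        funext fun i => mul_inv_cancel₀ (hene i), diagonal_one]
  have hform : Tᵀ * M * T = diagonal (Sum.elim d d) := by
    rw [hT_def, hM_def, hXeq]
    exact fermi_form_calc Q Y d hQtQ hY.eq e hene hed
  have hTTinv : T * Tinv = 1 := fermi_inv_calc Q Y hQQt e hene
  -- Ω is the image of E under T
  have himage : (fun z => T.mulVec z) '' E = Ω := by
    ext z
    constructor
    · rintro ⟨w, hw, rfl⟩
      show (T *ᵥ w) ⬝ᵥ (M *ᵥ (T *ᵥ w)) ≤ ℏ * X.trace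
      rw [← fermi_dot_conj, hform]
      exact hw
    · intro hz
      refine ⟨Tinv *ᵥ z, ?_, ?_⟩
      · show (Tinv *ᵥ z) ⬝ᵥ ((diagonal (Sum.elim d d)) *ᵥ (Tinv *ᵥ z)) ≤ ℏ * X.trace
        rw [← hform, fermi_dot_conj, mulVec_mulVec, hTTinv, one_mulVec]
        exact hz
      · show T *ᵥ (Tinv *ᵥ z) = z
        rw [mulVec_mulVec, hTTinv, one_mulVec]
  have hcΩE : c Ω = c E := by
    have := hc.sympl_inv T hTsympl 0 E
    rw [show (fun z => T.mulVec z + 0) = fun z => T.mulVec z from funext fun z => add_zero _]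
      at this
    rw [himage] at this
    exact this
  -- trace and maximum eigenvalue
  have htr : X.trace = ∑ j, d j := by
    rw [hXeq, trace_mul_cycle, hQtQ, Matrix.one_mul, trace_diagonal]
  obtain ⟨jm, -, hjm⟩ := Finset.exists_max_image Finset.univ d ⟨Classical.arbitrary (Fin n),
    Finset.mem_univ _⟩
  have hjm' : ∀ j, d j ≤ d jm := fun j => hjm j (Finset.mem_univ j)
  have hSpos : 0 < ∑ j, d j :=
    Finset.sum_pos (fun i _ => hdpos i) Finset.univ_nonempty
  have hrad_pos : 0 < ℏ * (∑ j, d j) / d jm := div_pos (mul_pos hℏ hSpos) (hdpos jm)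
  set r : ℝ := Real.sqrt (ℏ * (∑ j, d j) / d jm) with hr_def
  have hrpos : 0 < r := Real.sqrt_pos.mpr hrad_pos
  have hr2 : r ^ 2 = ℏ * (∑ j, d j) / d jm := Real.sq_sqrt hrad_pos.le
  -- ball ⊆ E ⊆ cylinder
  have hball : euclBall n r ⊆ E := by
    intro w hw
    show w ⬝ᵥ ((diagonal (Sum.elim d d)) *ᵥ w) ≤ ℏ * X.trace
    rw [fermi_quad_formula, htr]
    have h1 : ∑ j, d j * ((w (Sum.inl j)) ^ 2 + (w (Sum.inr j)) ^ 2) ≤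
        ∑ j, d jm * ((w (Sum.inl j)) ^ 2 + (w (Sum.inr j)) ^ 2) := by
      apply Finset.sum_le_sum
      intro j _
      apply mul_le_mul_of_nonneg_right (hjm' j)
      positivity
    have h2 : ∑ j, d jm * ((w (Sum.inl j)) ^ 2 + (w (Sum.inr j)) ^ 2) =
        d jm * ∑ i, (w i) ^ 2 := by
      rw [← Finset.mul_sum]
      congr 1
      rw [Fintype.sum_sum_type, Finset.sum_add_distrib]
    have hw' : ∑ i, (w i) ^ 2 ≤ r ^ 2 := hw
    have h3 : d jm * ∑ i, (w i) ^ 2 ≤ d jm * r ^ 2 :=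
      mul_le_mul_of_nonneg_left hw' (hdpos jm).le
    have h4 : d jm * r ^ 2 = ℏ * ∑ j, d j := by
      rw [hr2, mul_comm, div_mul_cancel₀ _ (hdpos jm).ne']
    linarith
  have hcyl : E ⊆ symplCyl n jm r := by
    intro w hw
    have hw' : ∑ j, d j * ((w (Sum.inl j)) ^ 2 + (w (Sum.inr j)) ^ 2) ≤ ℏ * ∑ j, d j := by
      have h : w ⬝ᵥ ((diagonal (Sum.elim d d)) *ᵥ w) ≤ ℏ * X.trace := hw
      rwa [fermi_quad_formula, htr] at h
    have hsingle : d jm * ((w (Sum.inl jm)) ^ 2 + (w (Sum.inr jm)) ^ 2) ≤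
        ∑ j, d j * ((w (Sum.inl j)) ^ 2 + (w (Sum.inr j)) ^ 2) := by
      apply Finset.single_le_sum (f := fun j => d j * ((w (Sum.inl j)) ^ 2 + (w (Sum.inr j)) ^ 2))
        (fun j _ => mul_nonneg (hdpos j).le (by positivity)) (Finset.mem_univ jm)
    show (w (Sum.inl jm)) ^ 2 + (w (Sum.inr jm)) ^ 2 ≤ r ^ 2
    rw [hr2]
    rw [le_div_iff₀ (hdpos jm)]
    nlinarith [hdpos jm]
  -- capacity of E is exactly π r²
  have hcE : c E = ENNReal.ofReal (Real.pi * r ^ 2) := by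
    apply le_antisymm
    · calc c E ≤ c (symplCyl n jm r) := hc.mono _ _ hcyl
        _ = ENNReal.ofReal (Real.pi * r ^ 2) := hc.norm_cyl jm r hrpos
    · calc ENNReal.ofReal (Real.pi * r ^ 2) = c (euclBall n r) := (hc.norm_ball r hrpos).symm
        _ ≤ c E := hc.mono _ _ hball
  have hcΩ : c Ω = ENNReal.ofReal (Real.pi * (ℏ * (∑ j, d j) / d jm)) := by
    rw [hcΩE, hcE, hr2]
  have hd_le_S : d jm ≤ ∑ j, d j :=
    Finset.single_le_sum (fun i _ => (hdpos i).le) (Finset.mem_univ jm)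
  have hS_le : (∑ j, d j) ≤ n * d jm := by
    calc (∑ j, d j) ≤ ∑ _j : Fin n, d jm := Finset.sum_le_sum fun j _ => hjm' j
      _ = n * d jm := by rw [Finset.sum_const, Finset.card_univ, Fintype.card_fin,
        nsmul_eq_mul]
  refine ⟨?_, ?_, ?_⟩
  · rw [hcΩ]
    apply ENNReal.ofReal_le_ofReal
    have key : ℏ ≤ ℏ * (∑ j, d j) / d jm := by
      rw [le_div_iff₀ (hdpos jm)]
      nlinarith
    nlinarith [Real.pi_pos]
  · rw [hcΩ]
    apply ENNReal.ofReal_le_ofReal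
    have key : ℏ * (∑ j, d j) / d jm ≤ n * ℏ := by
      rw [div_le_iff₀ (hdpos jm)]
      nlinarith
    nlinarith [Real.pi_pos]
  · intro heq
    have hdall : ∀ j, d j = d jm := fun j => heq _ (hdspec j) _ (hdspec jm)
    have hS : (∑ j, d j) = n * d jm := by
      calc (∑ j, d j) = ∑ _j : Fin n, d jm := Finset.sum_congr rfl fun j _ => hdall j
        _ = n * d jm := by rw [Finset.sum_const, Finset.card_univ, Fintype.card_fin,
          nsmul_eq_mul]
    have hdne : d jm ≠ 0 := (hdpos jm).ne'
    rw [hcΩ, hS, show ℏ * (↑n * d jm) / d jm = ℏ * ↑n from by field_simp]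
    congr 1
    ring
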